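/- Let n be a positive even integer and write n = 2^a \cdot b with b odd. Then there is a list containing each binary partition of n exactly once, in which every two consecutive partitions differ by a single elementary move, whose first entry is the partition of n into n parts each equal to 1, and whose last entry is the partition of n into b parts each equal to 2^a. -/

import Mathlib

/-- A binary partition: a multiset of parts, each a power of two. -/
def IsBinaryPartition (P : Multiset ℕ) : Prop := ∀ p ∈ P, ∃ k : ℕ, p = 2 ^ k

/-- `P` and `Q` differ by an elementary move: for some `k`, `Q` is obtained from `P`
by removing two copies of `2^k` and adding one copy of `2^(k+1)`, or vice versa. -/
def ElementaryMove (P Q : Multiset ℕ) : Prop :=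
  ∃ k : ℕ, Q + {2 ^ k, 2 ^ k} = P + {2 ^ (k + 1)} ∨ P + {2 ^ k, 2 ^ k} = Q + {2 ^ (k + 1)}

lemma move_symm {P Q : Multiset ℕ} (h : ElementaryMove P Q) : ElementaryMove Q P := by
  obtain ⟨k, h | h⟩ := h
  · exact ⟨k, Or.inr h⟩
  · exact ⟨k, Or.inl h⟩

lemma move_add {P Q R : Multiset ℕ} (h : ElementaryMove P Q) :
    ElementaryMove (P + R) (Q + R) := by
  obtain ⟨k, h | h⟩ := h
  · exact ⟨k, Or.inl (by rw [add_right_comm, h, add_right_comm])⟩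
  · exact ⟨k, Or.inr (by rw [add_right_comm, h, add_right_comm])⟩

lemma move_sum {P Q : Multiset ℕ} (h : ElementaryMove P Q) : P.sum = Q.sum := by
  obtain ⟨k, h | h⟩ := h <;>
  · have := congrArg Multiset.sum h
    simp [Multiset.sum_add, pow_succ] at this
    omega

lemma move_double {P Q : Multiset ℕ} (h : ElementaryMove P Q) :
    ElementaryMove (P.map (fun x => 2 * x)) (Q.map (fun x => 2 * x)) := by
  obtain ⟨k, h | h⟩ := h
  · refine ⟨k + 1, Or.inl ?_⟩
    have := congrArg (Multiset.map (fun x => 2 * x)) h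
    simpa [Multiset.map_add, pow_succ, mul_comm] using this
  · refine ⟨k + 1, Or.inr ?_⟩
    have := congrArg (Multiset.map (fun x => 2 * x)) h
    simpa [Multiset.map_add, pow_succ, mul_comm] using this

def Step (P Q : Multiset ℕ) : Prop :=
  ElementaryMove P Q ∨ Q = P + {1} ∨ P = Q + {1}

def lift (n : ℕ) (Q : Multiset ℕ) : Multiset ℕ :=
  Q.map (fun x => 2 * x) + Multiset.replicate (n - 2 * Q.sum) 1

lemma sum_map_double (Q : Multiset ℕ) : (Q.map (fun x => 2 * x)).sum = 2 * Q.sum := by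
  induction Q using Multiset.induction with
  | empty => simp
  | cons a s ih => simp [ih]; ring

lemma lift_plus_one {n : ℕ} {P Q : Multiset ℕ} (hQ : 2 * Q.sum ≤ n) (h : Q = P + {1}) :
    ElementaryMove (lift n P) (lift n Q) := by
  have hs : Q.sum = P.sum + 1 := by rw [h]; simp
  refine ⟨0, Or.inl ?_⟩
  have h2 : (2:ℕ) ^ 0 = 1 := rfl
  have h3 : (2:ℕ) ^ (0+1) = 2 := rfl
  rw [h2, h3]
  have hrep : Multiset.replicate (n - 2 * P.sum) 1
      = Multiset.replicate (n - 2 * Q.sum) 1 + {1, 1} := by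
    have : n - 2 * P.sum = (n - 2 * Q.sum) + 2 := by omega
    rw [this, Multiset.replicate_add]
    rfl
  have hmap : Q.map (fun x => 2 * x) = P.map (fun x => 2 * x) + {2} := by
    rw [h]; simp
  show lift n Q + {1, 1} = lift n P + {2}
  rw [lift, lift, hrep, hmap]
  abel_nf

lemma lift_step {n : ℕ} {P Q : Multiset ℕ} (hP : 2 * P.sum ≤ n) (hQ : 2 * Q.sum ≤ n)
    (h : Step P Q) : ElementaryMove (lift n P) (lift n Q) := by
  rcases h with h | h | h
  · have hs := move_sum h
    unfold lift
    rw [hs]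
    exact move_add (move_double h)
  · exact lift_plus_one hQ h
  · exact move_symm (lift_plus_one hP h)

lemma binary_one_mem {Q : Multiset ℕ} (hb : IsBinaryPartition Q) (hodd : Odd Q.sum) :
    1 ∈ Q := by
  by_contra h
  have h2 : 2 ∣ Q.sum := by
    refine Multiset.dvd_sum ?_
    intro x hx
    obtain ⟨k, rfl⟩ := hb x hx
    rcases Nat.eq_zero_or_pos k with rfl | hk
    · simp at hx; exact absurd hx h
    · exact dvd_pow_self 2 hk.ne'
  exact (Nat.not_even_iff_odd.mpr hodd) (even_iff_two_dvd.mpr h2)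

lemma binary_sum_zero {Q : Multiset ℕ} (hb : IsBinaryPartition Q) (h : Q.sum = 0) : Q = 0 := by
  rw [Multiset.eq_zero_iff_forall_notMem]
  intro x hx
  obtain ⟨k, rfl⟩ := hb x hx
  have := Multiset.sum_eq_zero_iff.mp h _ hx
  exact absurd this (pow_pos (by norm_num : (0:ℕ) < 2) k).ne'

lemma binary_sum_one {Q : Multiset ℕ} (hb : IsBinaryPartition Q) (h : Q.sum = 1) :
    Q = {1} := by
  have h1 : 1 ∈ Q := binary_one_mem hb (by rw [h]; exact odd_one)
  have he : Q = 1 ::ₘ Q.erase 1 := (Multiset.cons_erase h1).symm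
  have hs : (Q.erase 1).sum = 0 := by
    have := congrArg Multiset.sum he
    simp at this; omega
  have hz : Q.erase 1 = 0 :=
    binary_sum_zero (fun p hp => hb p (Multiset.mem_of_mem_erase hp)) hs
  rw [he, hz]; rfl

lemma lift_binary {n : ℕ} {Q : Multiset ℕ} (hb : IsBinaryPartition Q) :
    IsBinaryPartition (lift n Q) := by
  intro p hp
  rw [lift, Multiset.mem_add] at hp
  rcases hp with hp | hp
  · obtain ⟨x, hx, rfl⟩ := Multiset.mem_map.mp hp
    obtain ⟨k, rfl⟩ := hb x hx
    exact ⟨k + 1, by rw [pow_succ, mul_comm]⟩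
  · exact ⟨0, by simpa using (Multiset.eq_of_mem_replicate hp)⟩

lemma lift_sum {n : ℕ} {Q : Multiset ℕ} (h : 2 * Q.sum ≤ n) : (lift n Q).sum = n := by
  rw [lift, Multiset.sum_add, sum_map_double, Multiset.sum_replicate, smul_eq_mul]
  omega

lemma count_one_map_double (Q : Multiset ℕ) : (Q.map (fun x => 2 * x)).count 1 = 0 := by
  rw [Multiset.count_eq_zero]
  intro h
  obtain ⟨x, _, hx⟩ := Multiset.mem_map.mp h
  omega

lemma lift_inj {n : ℕ} {Q Q' : Multiset ℕ} (hQ : 2 * Q.sum ≤ n) (hQ' : 2 * Q'.sum ≤ n)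
    (h : lift n Q = lift n Q') : Q = Q' := by
  have hc := congrArg (Multiset.count 1) h
  rw [lift, lift, Multiset.count_add, Multiset.count_add, count_one_map_double,
    count_one_map_double, Multiset.count_replicate] at hc
  simp at hc
  have hsum : Q.sum = Q'.sum := by omega
  have hmap : Q.map (fun x => 2 * x) = Q'.map (fun x => 2 * x) := by
    have : Multiset.replicate (n - 2 * Q.sum) 1 = Multiset.replicate (n - 2 * Q'.sum) 1 := by
      rw [hsum]
    rw [lift, lift, this] at h
    exact add_right_cancel h
  exact Multiset.map_injective (fun a b hab => by omega) hmap

lemma lift_surj {n : ℕ} {P : Multiset ℕ} (hsum : P.sum = n) (hb : IsBinaryPartition P) :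
    ∃ Q : Multiset ℕ, IsBinaryPartition Q ∧ 2 * Q.sum ≤ n ∧ lift n Q = P := by
  set R : Multiset ℕ := P.filter (fun x => 1 < x) with hR
  set Q : Multiset ℕ := R.map (fun x => x / 2) with hQdef
  have hRmem : ∀ r ∈ R, ∃ k : ℕ, r = 2 ^ (k + 1) := by
    intro r hr
    have h1 : r ∈ P := Multiset.mem_of_mem_filter hr
    have h2 : 1 < r := Multiset.of_mem_filter hr
    obtain ⟨k, rfl⟩ := hb r h1
    cases k with
    | zero => simp at h2
    | succ k => exact ⟨k, rfl⟩
  have hmapR : Q.map (fun x => 2 * x) = R := by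
    rw [hQdef, Multiset.map_map]
    rw [show R = R.map id from (Multiset.map_id R).symm]
    rw [Multiset.map_map]
    refine Multiset.map_congr rfl ?_
    intro r hr
    obtain ⟨k, rfl⟩ := hRmem r hr
    simp [pow_succ, mul_comm]
  have hQsum : 2 * Q.sum = R.sum := by
    rw [← hmapR, sum_map_double]
  have hRle : R.sum ≤ n := by
    rw [← hsum]
    obtain ⟨u, hu⟩ := Multiset.le_iff_exists_add.mp (Multiset.filter_le (fun x => 1 < x) P)
    rw [hu, Multiset.sum_add]
    simp [hR]
  have hsplit : R + P.filter (fun x => ¬ 1 < x) = P := Multiset.filter_add_not _ _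
  have hones : P.filter (fun x => ¬ 1 < x) = Multiset.replicate (n - R.sum) 1 := by
    have hall : ∀ x ∈ P.filter (fun x => ¬ 1 < x), x = 1 := by
      intro x hx
      have h1 : x ∈ P := Multiset.mem_of_mem_filter hx
      have h2 : ¬ 1 < x := (Multiset.mem_filter.mp hx).2
      obtain ⟨k, rfl⟩ := hb x h1
      cases k with
      | zero => rfl
      | succ k => exact absurd (Nat.one_lt_two_pow (by omega)) h2
    have hrep := Multiset.eq_replicate_card.mpr hall
    rw [hrep]
    congr 1
    have := congrArg Multiset.sum hsplit
    rw [Multiset.sum_add] at this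
    have hsum2 : (P.filter (fun x => ¬ 1 < x)).sum = Multiset.card (P.filter (fun x => ¬ 1 < x)) := by
      rw [hrep]; simp
    omega
  refine ⟨Q, ?_, by omega, ?_⟩
  · intro x hx
    obtain ⟨r, hr, rfl⟩ := Multiset.mem_map.mp hx
    obtain ⟨k, rfl⟩ := hRmem r hr
    exact ⟨k, by simp [pow_succ]⟩
  · rw [lift, hmapR, ← hQsum] at *
    rw [hQsum, ← hones]
    exact hsplit

lemma chain'_map_of_mem {α β : Type*} {R : α → α → Prop} {S : β → β → Prop} {f : α → β} :
    ∀ {l : List α}, l.Chain' R → (∀ a ∈ l, ∀ b ∈ l, R a b → S (f a) (f b)) →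
      (l.map f).Chain' S := by
  intro l
  induction l with
  | nil => intro _ _; exact List.isChain_nil
  | cons a t ih =>
    intro hch hmem
    cases t with
    | nil => exact List.isChain_singleton _
    | cons b t' =>
      rw [List.Chain', List.isChain_cons_cons] at hch
      rw [List.Chain', List.map_cons, List.map_cons, List.isChain_cons_cons]
      constructor
      · exact hmem a (by simp) b (by simp) hch.1
      · rw [← List.map_cons]
        exact ih hch.2 (fun x hx y hy hr => hmem x (List.mem_cons_of_mem a hx)
          y (List.mem_cons_of_mem a hy) hr)

/-- The canonical "final" partition of `m`: `oddPart m` copies of `2 ^ (v₂ m)`. -/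
def Tm (m : ℕ) : Multiset ℕ := Multiset.replicate (ordCompl[2] m) (2 ^ (m.factorization 2))

lemma Tm_of {k c : ℕ} (hc : Odd c) : Tm (2 ^ k * c) = Multiset.replicate c (2 ^ k) := by
  have hc0 : c ≠ 0 := by rintro rfl; simp at hc
  have hnd : ¬ (2 ∣ c) := by
    have := Nat.odd_iff.mp hc; omega
  have hfac : (2 ^ k * c).factorization 2 = k := by
    rw [Nat.factorization_mul (pow_ne_zero _ two_ne_zero) hc0]
    rw [Nat.Prime.factorization_pow Nat.prime_two]
    simp [Nat.factorization_eq_zero_of_not_dvd hnd]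
  rw [Tm, hfac, Nat.mul_div_cancel_left c (pow_pos (by norm_num : (0:ℕ) < 2) k)]

lemma Tm_odd {m : ℕ} (hm : Odd m) : Tm m = Multiset.replicate m 1 := by
  have := Tm_of (k := 0) hm
  simpa using this

lemma Tm_zero : Tm 0 = 0 := by simp [Tm]

lemma Tm_sum (m : ℕ) : (Tm m).sum = m := by
  rcases Nat.eq_zero_or_pos m with rfl | hm
  · simp [Tm]
  · rw [Tm, Multiset.sum_replicate, smul_eq_mul, mul_comm]
    exact Nat.ordProj_mul_ordCompl_eq_self m 2

lemma Tm_binary (m : ℕ) : IsBinaryPartition (Tm m) := by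
  intro p hp
  exact ⟨m.factorization 2, Multiset.eq_of_mem_replicate hp⟩

lemma Tm_double {m : ℕ} (hm : 0 < m) : (Tm m).map (fun x => 2 * x) = Tm (2 * m) := by
  obtain ⟨k, c, hc, rfl⟩ : ∃ k c, Odd c ∧ m = 2 ^ k * c := by
    refine ⟨m.factorization 2, ordCompl[2] m, ?_, ?_⟩
    · rw [Nat.odd_iff]
      have := Nat.not_dvd_ordCompl Nat.prime_two hm.ne'
      omega
    · exact (Nat.ordProj_mul_ordCompl_eq_self m 2).symm
  rw [Tm_of hc, Multiset.map_replicate, show 2 * (2 ^ k * c) = 2 ^ (k+1) * c by ring,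
    Tm_of hc]
  congr 1
  rw [pow_succ, mul_comm]

lemma rep_succ (k x : ℕ) : Multiset.replicate k x + {x} = Multiset.replicate (k+1) x := by
  rw [Multiset.replicate_add, Multiset.replicate_one]

def RStmt (n : ℕ) : Prop :=
  ∃ L : List (Multiset ℕ), L.Nodup ∧
    (∀ P : Multiset ℕ, P ∈ L ↔ P.sum = n ∧ IsBinaryPartition P) ∧
    L.Chain' ElementaryMove ∧
    L.head? = some (Multiset.replicate n 1) ∧
    L.getLast? = some (Tm n)

lemma snake : ∀ (m : ℕ), (∀ h, h ≤ m → 0 < h → Even h → RStmt h) →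
    ∃ S : List (Multiset ℕ), S.Nodup ∧
      (∀ Q : Multiset ℕ, Q ∈ S ↔ IsBinaryPartition Q ∧ Q.sum ≤ m) ∧
      S.Chain' Step ∧ S.head? = some 0 ∧ S.getLast? = some (Tm m) := by
  intro m
  induction m with
  | zero =>
    intro _
    refine ⟨[0], List.nodup_singleton 0, ?_, List.isChain_singleton _, rfl, by simp [Tm_zero]⟩
    intro Q
    simp only [List.mem_singleton]
    constructor
    · rintro rfl
      exact ⟨fun p hp => absurd hp (Multiset.notMem_zero p), by simp⟩
    · rintro ⟨hb, hs⟩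
      exact binary_sum_zero hb (Nat.le_zero.mp hs)
  | succ m ih =>
    intro IHR
    obtain ⟨S, hSnd, hSmem, hSch, hShead, hSlast⟩ :=
      ih (fun h hh h0 he => IHR h (Nat.le_succ_of_le hh) h0 he)
    -- construct the block B of partitions of m+1
    have hblock : ∃ B : List (Multiset ℕ), B.Nodup ∧
        (∀ Q : Multiset ℕ, Q ∈ B ↔ IsBinaryPartition Q ∧ Q.sum = m + 1) ∧
        B.Chain' Step ∧ B.head? = some (Tm m + {1}) ∧ B.getLast? = some (Tm (m+1)) := by
      rcases Nat.even_or_odd m with hme | hmo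
      · -- m even, m+1 odd : block is (reverse of path for m) with a 1 added everywhere
        rcases Nat.eq_zero_or_pos m with rfl | hm0
        · refine ⟨[{1}], List.nodup_singleton _, ?_, List.isChain_singleton _, by simp [Tm_zero], by
            rw [show (0+1) = 1 from rfl, Tm_odd odd_one]; rfl⟩
          intro Q
          simp only [List.mem_singleton]
          constructor
          · rintro rfl
            constructor
            · intro p hp
              rw [Multiset.mem_singleton] at hp
              exact ⟨0, by simp [hp]⟩
            · simp
          · rintro ⟨hb, hs⟩
            exact binary_sum_one hb hs
        · obtain ⟨L, hLnd, hLmem, hLch, hLhead, hLlast⟩ := IHR m (Nat.le_succ m) hm0 hme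
          refine ⟨(L.reverse).map (fun q => q + {1}), ?_, ?_, ?_, ?_, ?_⟩
          · exact (List.nodup_reverse.mpr hLnd).map_on
              (fun x _ y _ hxy => add_right_cancel hxy)
          · intro Q
            rw [List.mem_map]
            constructor
            · rintro ⟨q, hq, rfl⟩
              rw [List.mem_reverse] at hq
              obtain ⟨hqs, hqb⟩ := (hLmem q).mp hq
              constructor
              · intro p hp
                rw [Multiset.mem_add] at hp
                rcases hp with hp | hp
                · exact hqb p hp
                · exact ⟨0, by simpa using hp⟩
              · simp [hqs]
            · rintro ⟨hb, hs⟩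
              have h1 : 1 ∈ Q := binary_one_mem hb (by rw [hs]; exact Even.add_one hme)
              refine ⟨Q.erase 1, ?_, ?_⟩
              · rw [List.mem_reverse]
                refine (hLmem _).mpr ⟨?_, ?_⟩
                · have := congrArg Multiset.sum (Multiset.cons_erase h1)
                  simp at this
                  omega
                · exact fun p hp => hb p (Multiset.mem_of_mem_erase hp)
              · rw [add_comm, Multiset.singleton_add]
                exact Multiset.cons_erase h1
          · refine chain'_map_of_mem (R := ElementaryMove) ((List.isChain_reverse).mpr ?_) ?_
            · exact hLch.imp (fun a b h => move_symm h)
            · exact fun a _ b _ h => Or.inl (move_add h)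
          · rw [List.head?_map, List.head?_reverse, hLlast]
            rfl
          · rw [List.getLast?_map, List.getLast?_reverse, hLhead]
            rw [Option.map_some, rep_succ, Tm_odd (Even.add_one hme)]
      · -- m odd, m+1 even : block is the path for m+1 given by IHR
        obtain ⟨L, hLnd, hLmem, hLch, hLhead, hLlast⟩ :=
          IHR (m+1) le_rfl (Nat.succ_pos m) (Odd.add_one hmo)
        refine ⟨L, hLnd, ?_, hLch.imp (fun a b h => Or.inl h), ?_, hLlast⟩
        · intro Q
          rw [hLmem]
          tauto
        · rw [hLhead, Tm_odd hmo, rep_succ]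
    obtain ⟨B, hBnd, hBmem, hBch, hBhead, hBlast⟩ := hblock
    refine ⟨S ++ B, ?_, ?_, ?_, ?_, ?_⟩
    · refine hSnd.append hBnd ?_
      intro x hxS hxB
      have h1 := ((hSmem x).mp hxS).2
      have h2 := ((hBmem x).mp hxB).2
      omega
    · intro Q
      rw [List.mem_append, hSmem, hBmem]
      constructor
      · rintro (⟨hb, hs⟩ | ⟨hb, hs⟩) <;> exact ⟨hb, by omega⟩
      · rintro ⟨hb, hs⟩
        rcases Nat.lt_or_ge Q.sum (m+1) with h | h
        · exact Or.inl ⟨hb, by omega⟩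
        · exact Or.inr ⟨hb, by omega⟩
    · refine hSch.append hBch ?_
      intro x hx y hy
      rw [hSlast, Option.mem_some_iff] at hx
      rw [hBhead, Option.mem_some_iff] at hy
      subst hx; subst hy
      exact Or.inr (Or.inl rfl)
    · cases S with
      | nil => simp at hShead
      | cons a t => simpa using hShead
    · rw [List.getLast?_append, hBlast]
      rfl

lemma RStmt_even : ∀ n : ℕ, 0 < n → Even n → RStmt n := by
  intro n
  induction n using Nat.strong_induction_on with
  | _ n IH =>
    intro hn heven
    obtain ⟨m, hm⟩ := heven
    have hm2 : n = 2 * m := by omega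
    have hm1 : 1 ≤ m := by omega
    obtain ⟨S, hSnd, hSmem, hSch, hShead, hSlast⟩ :=
      snake m (fun h hh h0 he => IH h (by omega) h0 he)
    refine ⟨S.map (lift n), ?_, ?_, ?_, ?_, ?_⟩
    · refine hSnd.map_on ?_
      intro x hx y hy hxy
      have h1 := ((hSmem x).mp hx).2
      have h2 := ((hSmem y).mp hy).2
      exact lift_inj (by omega) (by omega) hxy
    · intro P
      rw [List.mem_map]
      constructor
      · rintro ⟨Q, hQ, rfl⟩
        obtain ⟨hb, hs⟩ := (hSmem Q).mp hQ
        exact ⟨lift_sum (by omega), lift_binary hb⟩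
      · rintro ⟨hs, hb⟩
        obtain ⟨Q, hQb, hQs, hQl⟩ := lift_surj hs hb
        exact ⟨Q, (hSmem Q).mpr ⟨hQb, by omega⟩, hQl⟩
    · refine chain'_map_of_mem (R := Step) hSch ?_
      intro a ha b hb h
      have h1 := ((hSmem a).mp ha).2
      have h2 := ((hSmem b).mp hb).2
      exact lift_step (by omega) (by omega) h
    · rw [List.head?_map, hShead, Option.map_some]
      congr 1
    · rw [List.getLast?_map, hSlast, Option.map_some]
      congr 1
      rw [lift, Tm_sum, show n - 2 * m = 0 by omega, Multiset.replicate_zero, add_zero,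
        Tm_double hm1, ← hm2]

theorem gray_sequence_first_and_last (n a c : ℕ) (hn : 0 < n) (heven : Even n)
    (hc : Odd c) (hfact : n = 2 ^ a * c) :
    ∃ L : List (Multiset ℕ),
      L.Nodup ∧
      (∀ P : Multiset ℕ, P ∈ L ↔ P.sum = n ∧ IsBinaryPartition P) ∧
      L.Chain' ElementaryMove ∧
      L.head? = some (Multiset.replicate n 1) ∧
      L.getLast? = some (Multiset.replicate c (2 ^ a)) := by
  have h := RStmt_even n hn heven
  rw [RStmt] at h
  have : Tm n = Multiset.replicate c (2 ^ a) := by rw [hfact, Tm_of hc]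
  rw [this] at h
  exact h
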